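/- Suppose the matrices M_1,…,M_r satisfy conditions (H1a), (H1b) and (H1c). Let 1 ≤ j_1,…,j_p ≤ r and let a_0,…,a_p ∈ A satisfy M_{j_i}(a_i, a_{i−1}) = 1 for 1 ≤ i ≤ p. Then there exists a unique word w ∈ W with σ(w) = e_{j_1}+⋯+e_{j_p}, such that w(0) = a_0 and w(e_{j_1}+⋯+e_{j_i}) = a_i for 1 ≤ i ≤ p. -/
import Mathlib


open Matrix

variable {r : ℕ} {A : Type*}

/-- The `j`-th standard basis vector of `ℤ^r`. -/
def evec (r : ℕ) (j : Fin r) : Fin r → ℤ := fun i => if i = j then 1 else 0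

/-- `w` represents a word of shape `m` (only its values on `[0,m]` matter):
`m ≥ 0` and the transition matrices are respected on the box `[0,m]`. -/
def IsWord (M : Fin r → Matrix A A ℤ) (m : Fin r → ℤ) (w : (Fin r → ℤ) → A) : Prop :=
  0 ≤ m ∧ ∀ (l : Fin r → ℤ) (j : Fin r), 0 ≤ l → l + evec r j ≤ m →
    M j (w (l + evec r j)) (w l) = 1

/-- Two representing functions agree on the box `[0,m]`; this is equality of
words of shape `m`. -/
def AgreeOn (m : Fin r → ℤ) (w w' : (Fin r → ℤ) → A) : Prop :=
  ∀ l : Fin r → ℤ, 0 ≤ l → l ≤ m → w l = w' l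

/-- The restriction `w|[k,k+n]`, as a word based at `0`: `(restrictW k w) i = w (i + k)`. -/
def restrictW (k : Fin r → ℤ) (w : (Fin r → ℤ) → A) : (Fin r → ℤ) → A :=
  fun i => w (i + k)

/-- `w` (a word of shape `m`) is `p`-periodic: the translate `τ_p w`, given by
`(τ_p w)(x) = w (x - p)`, agrees with `w` on `[0,m] ∩ [p,p+m]`. -/
def IsPeriodic (p m : Fin r → ℤ) (w : (Fin r → ℤ) → A) : Prop :=
  ∀ x : Fin r → ℤ, 0 ≤ x → x ≤ m → p ≤ x → x ≤ p + m → w (x - p) = w x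

/-- Condition (H0): each `M j` is nonzero. -/
def H0 (M : Fin r → Matrix A A ℤ) : Prop := ∀ j, M j ≠ 0

/-- Condition (H1): unique products of words. -/
def H1 (M : Fin r → Matrix A A ℤ) : Prop :=
  ∀ (m n : Fin r → ℤ) (u v : (Fin r → ℤ) → A),
    IsWord M m u → IsWord M n v → u m = v 0 →
      (∃ w, IsWord M (m + n) w ∧ AgreeOn m w u ∧ AgreeOn n (restrictW m w) v) ∧
      (∀ w w', IsWord M (m + n) w → AgreeOn m w u → AgreeOn n (restrictW m w) v →
        IsWord M (m + n) w' → AgreeOn m w' u → AgreeOn n (restrictW m w') v →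
        AgreeOn (m + n) w w')

/-- Condition (H2): the directed graph on `A` with an edge `a → b` whenever
`M i b a = 1` for some `i` is irreducible. -/
def H2 (M : Fin r → Matrix A A ℤ) : Prop :=
  ∀ a b : A, Relation.ReflTransGen (fun x y => ∃ i, M i y x = 1) a b

/-- Condition (H3): for each nonzero `p ∈ ℤ^r` there is a non-`p`-periodic word. -/
def H3 (M : Fin r → Matrix A A ℤ) : Prop :=
  ∀ p : Fin r → ℤ, p ≠ 0 → ∃ (m : Fin r → ℤ) (w : (Fin r → ℤ) → A),
    IsWord M m w ∧ ¬ IsPeriodic p m w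

/-- Condition (H1a): the matrices commute. -/
def H1a [Fintype A] (M : Fin r → Matrix A A ℤ) : Prop :=
  ∀ i j, M i * M j = M j * M i

/-- Condition (H1b): for `i < j`, the entries of `M i * M j` lie in `{0,1}`. -/
def H1b [Fintype A] (M : Fin r → Matrix A A ℤ) : Prop :=
  ∀ i j, i < j → ∀ a b : A, (M i * M j) b a = 0 ∨ (M i * M j) b a = 1

/-- Condition (H1c): for `i < j < k`, the entries of `M i * M j * M k` lie in `{0,1}`. -/
def H1c [Fintype A] (M : Fin r → Matrix A A ℤ) : Prop :=
  ∀ i j k, i < j → j < k → ∀ a b : A,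
    (M i * M j * M k) b a = 0 ∨ (M i * M j * M k) b a = 1

/-- Condition (H3*). -/
def H3star (M : Fin r → Matrix A A ℤ) : Prop :=
  ∀ (j : Fin r) (m : Fin r → ℤ), m j = 0 → ∀ w : (Fin r → ℤ) → A, IsWord M m w →
    ∃ u u', IsWord M (m + evec r j) u ∧ IsWord M (m + evec r j) u' ∧
      AgreeOn m u w ∧ AgreeOn m u' w ∧ u (evec r j) ≠ u' (evec r j)

/-- `x` represents the product word `uv` of `u ∈ W_m` and `v ∈ W_n`. -/
def IsProd (M : Fin r → Matrix A A ℤ) (m n : Fin r → ℤ)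
    (u v x : (Fin r → ℤ) → A) : Prop :=
  IsWord M (m + n) x ∧ AgreeOn m x u ∧ AgreeOn n (restrictW m x) v


@[simp] lemma evec_self (j : Fin r) : evec r j j = 1 := by simp [evec]
lemma evec_ne {i j : Fin r} (h : i ≠ j) : evec r j i = 0 := by simp [evec, h]
lemma evec_nonneg (j : Fin r) : (0 : Fin r → ℤ) ≤ evec r j := by
  rw [Pi.le_def]; intro i; simp [evec]; split_ifs <;> omega

/-- distance to the top corner -/
def mu (m l : Fin r → ℤ) : ℕ := ∑ d, (m d - l d).toNat

lemma mu_pos {m l : Fin r → ℤ} {d : Fin r} (h : l d < m d) : 1 ≤ mu m l := by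
  have : 1 ≤ (m d - l d).toNat := by omega
  calc 1 ≤ (m d - l d).toNat := this
    _ ≤ mu m l := Finset.single_le_sum (f := fun d => (m d - l d).toNat)
        (fun i _ => Nat.zero_le _) (Finset.mem_univ d)

lemma mu_succ {m l : Fin r → ℤ} {d : Fin r} (h : l d < m d) :
    mu m l = mu m (l + evec r d) + 1 := by
  classical
  unfold mu
  rw [← Finset.sum_erase_add _ _ (Finset.mem_univ d),
      ← Finset.sum_erase_add _ _ (Finset.mem_univ d)]
  have heq : ∀ i ∈ Finset.univ.erase d,
      (m i - (l + evec r d) i).toNat = (m i - l i).toNat := by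
    intro i hi
    have : i ≠ d := Finset.ne_of_mem_erase hi
    simp [evec_ne this]
  rw [Finset.sum_congr rfl heq]
  have : (l + evec r d) d = l d + 1 := by simp [evec]
  rw [this]
  omega

lemma apply_add_self (l : Fin r → ℤ) (d : Fin r) : (l + evec r d) d = l d + 1 := by
  simp [evec]
lemma apply_add_ne (l : Fin r → ℤ) {d d' : Fin r} (h : d' ≠ d) :
    (l + evec r d) d' = l d' := by simp [evec_ne h]
lemma apply_sub_self (l : Fin r → ℤ) (d : Fin r) : (l - evec r d) d = l d - 1 := by
  simp [evec]
lemma apply_sub_ne (l : Fin r → ℤ) {d d' : Fin r} (h : d' ≠ d) :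
    (l - evec r d) d' = l d' := by simp [evec_ne h]
lemma le_apply {f g : Fin r → ℤ} (h : f ≤ g) (d : Fin r) : f d ≤ g d := h d
lemma nonneg_apply {f : Fin r → ℤ} (h : 0 ≤ f) (d : Fin r) : 0 ≤ f d := h d
lemma nonneg_add {l : Fin r → ℤ} (hl : 0 ≤ l) (d : Fin r) : 0 ≤ l + evec r d :=
  le_trans hl (le_add_of_nonneg_right (evec_nonneg _))
lemma le_box_add {l m : Fin r → ℤ} {d : Fin r} (hl : l ≤ m) (hd : l d < m d) :
    l + evec r d ≤ m := by
  rw [Pi.le_def]; intro d'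
  by_cases h : d' = d
  · subst h; rw [apply_add_self]; omega
  · rw [apply_add_ne _ h]; exact hl d'


section Aux
variable [Fintype A]

lemma sum_le_one_unique {f : A → ℤ} (h0 : ∀ c, 0 ≤ f c) (h1 : ∑ c, f c ≤ 1)
    {c₁ c₂ : A} (hc₁ : 1 ≤ f c₁) (hc₂ : 1 ≤ f c₂) : c₁ = c₂ := by
  classical
  by_contra hne
  have hsub : ({c₁, c₂} : Finset A) ⊆ Finset.univ := Finset.subset_univ _
  have := Finset.sum_le_sum_of_subset_of_nonneg hsub (fun i _ _ => h0 i)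
  rw [Finset.sum_pair hne] at this
  linarith

lemma sum_ge_one_exists {f : A → ℤ} (h1 : 1 ≤ ∑ c, f c) : ∃ c, 1 ≤ f c := by
  by_contra hne
  push_neg at hne
  have : ∑ c, f c ≤ 0 := Finset.sum_nonpos (fun c _ => by have := hne c; omega)
  omega

variable {M : Fin r → Matrix A A ℤ} (hM : ∀ j (a b : A), M j b a = 0 ∨ M j b a = 1)
include hM

lemma Mnn (j : Fin r) (a b : A) : 0 ≤ M j b a := by rcases hM j a b with h | h <;> omega

lemma pair_le_one (h1a : H1a M) (h1b : H1b M) {i k : Fin r} (hik : i ≠ k) (a b : A) :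
    (M i * M k) b a ≤ 1 := by
  rcases lt_or_gt_of_ne hik with h | h
  · rcases h1b i k h a b with h' | h' <;> omega
  · rw [h1a i k]; rcases h1b k i h a b with h' | h' <;> omega

lemma pair_nonneg (i k : Fin r) (a b : A) : 0 ≤ (M i * M k) b a := by
  rw [Matrix.mul_apply]
  exact Finset.sum_nonneg fun c _ => mul_nonneg (Mnn hM i c b) (Mnn hM k a c)

/-- products of three pairwise distinct matrices have entries ≤ 1 -/
lemma triple_le_one (h1a : H1a M) (h1c : H1c M) {x y z : Fin r}
    (hxy : x ≠ y) (hyz : y ≠ z) (hxz : x ≠ z) (a b : A) :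
    (M x * M y * M z) b a ≤ 1 := by
  have key : ∀ i j k : Fin r, i < j → j < k →
      ∀ a b : A, (M i * M j * M k) b a ≤ 1 := by
    intro i j k hij hjk a b
    rcases h1c i j k hij hjk a b with h | h <;> omega
  have swap12 : M x * M y * M z = M y * M x * M z := by rw [h1a x y]
  have swap23 : M x * M y * M z = M x * M z * M y := by
    rw [mul_assoc, h1a y z, mul_assoc]
  rcases lt_trichotomy x y with h1 | h1 | h1
  · rcases lt_trichotomy y z with h2 | h2 | h2
    · exact key x y z h1 h2 a b
    · exact absurd h2 hyz
    · rcases lt_trichotomy x z with h3 | h3 | h3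
      · rw [swap23]; exact key x z y h3 h2 a b
      · exact absurd h3 hxz
      · rw [swap23, show M x * M z * M y = M z * M x * M y from by rw [h1a x z]]
        exact key z x y h3 h1 a b
  · exact absurd h1 hxy
  · rcases lt_trichotomy x z with h2 | h2 | h2
    · rw [swap12]; exact key y x z h1 h2 a b
    · exact absurd h2 hxz
    · rcases lt_trichotomy y z with h3 | h3 | h3
      · rw [swap12, show M y * M x * M z = M y * M z * M x from by
          rw [mul_assoc, h1a x z, mul_assoc]]
        exact key y z x h3 h2 a b
      · exact absurd h3 hyz
      · rw [swap12, show M y * M x * M z = M z * M y * M x from by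
          rw [mul_assoc, h1a x z, ← mul_assoc, h1a y z]]
        exact key z y x h3 h1 a b

lemma square_exists (h1a : H1a M) (h1b : H1b M) {i k : Fin r} (hik : i ≠ k)
    {a b c : A} (hab : M i b a = 1) (hbc : M k c b = 1) :
    ∃ d, M k d a = 1 ∧ M i c d = 1 := by
  have h1 : 1 ≤ (M k * M i) c a := by
    rw [Matrix.mul_apply]
    have : (1 : ℤ) ≤ M k c b * M i b a := by rw [hab, hbc]; norm_num
    calc (1:ℤ) ≤ M k c b * M i b a := this
      _ ≤ ∑ d, M k c d * M i d a :=
        Finset.single_le_sum (f := fun d => M k c d * M i d a)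
          (fun d _ => mul_nonneg (Mnn hM k d c) (Mnn hM i a d)) (Finset.mem_univ b)
  rw [h1a k i, Matrix.mul_apply] at h1
  obtain ⟨d, hd⟩ := sum_ge_one_exists h1
  refine ⟨d, ?_, ?_⟩
  · rcases hM k a d with h | h
    · rcases hM i d c with h' | h' <;> rw [h, h'] at hd <;> omega
    · exact h
  · rcases hM i d c with h | h
    · rcases hM k a d with h' | h' <;> rw [h, h'] at hd <;> omega
    · exact h

lemma square_unique (h1a : H1a M) (h1b : H1b M) {i k : Fin r} (hik : i ≠ k)
    {a c d₁ d₂ : A} (h₁ : M k d₁ a = 1) (h₁' : M i c d₁ = 1)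
    (h₂ : M k d₂ a = 1) (h₂' : M i c d₂ = 1) : d₁ = d₂ := by
  have hle : ∑ d, M i c d * M k d a ≤ 1 := by
    rw [← Matrix.mul_apply]; exact pair_le_one hM h1a h1b hik a c
  exact sum_le_one_unique (fun d => mul_nonneg (Mnn hM i d c) (Mnn hM k a d)) hle
    (by rw [h₁, h₁']; norm_num) (by rw [h₂, h₂']; norm_num)

/-- Cube consistency lemma. -/
lemma cube (h1a : H1a M) (h1b : H1b M) (h1c : H1c M)
    {d₀ d' k : Fin r} (h01 : d₀ ≠ d') (h0k : d₀ ≠ k) (h1k : d' ≠ k)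
    {u00 u01 v00 v10 v01 v11 : A}
    (e1 : M k v00 u00 = 1) (e2 : M d₀ v10 v00 = 1) (e3 : M d' v11 v10 = 1)
    (e4 : M d' u01 u00 = 1) (e5 : M k v01 u01 = 1) (e6 : M d₀ v11 v01 = 1) :
    M d' v01 v00 = 1 := by
  -- e* : unique vertex with v00 →d' e* →d₀ v11
  obtain ⟨e, he1, he2⟩ := square_exists hM h1a h1b h01 e2 e3
  -- triple sum bound
  have htr : ∑ c, M d₀ v11 c * (M d' * M k) c u00 ≤ 1 := by
    have : ∑ c, M d₀ v11 c * (M d' * M k) c u00 = (M d₀ * (M d' * M k)) v11 u00 := by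
      rw [Matrix.mul_apply]
    rw [this, ← mul_assoc]
    exact triple_le_one hM h1a h1c h01 h1k h0k u00 v11
  have hnn : ∀ c, 0 ≤ M d₀ v11 c * (M d' * M k) c u00 :=
    fun c => mul_nonneg (Mnn hM d₀ c v11) (pair_nonneg hM d' k u00 c)
  have hterm_e : 1 ≤ M d₀ v11 e * (M d' * M k) e u00 := by
    have : (1:ℤ) ≤ (M d' * M k) e u00 := by
      rw [Matrix.mul_apply]
      calc (1:ℤ) ≤ M d' e v00 * M k v00 u00 := by rw [he1, e1]; norm_num
        _ ≤ ∑ d, M d' e d * M k d u00 :=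
          Finset.single_le_sum (f := fun d => M d' e d * M k d u00)
            (fun d _ => mul_nonneg (Mnn hM d' d e) (Mnn hM k u00 d)) (Finset.mem_univ v00)
    nlinarith [Mnn hM d₀ e v11, he2.symm ▸ this]
  have hterm_v : 1 ≤ M d₀ v11 v01 * (M d' * M k) v01 u00 := by
    have h1 : (1:ℤ) ≤ (M k * M d') v01 u00 := by
      rw [Matrix.mul_apply]
      calc (1:ℤ) ≤ M k v01 u01 * M d' u01 u00 := by rw [e4, e5]; norm_num
        _ ≤ ∑ d, M k v01 d * M d' d u00 :=
          Finset.single_le_sum (f := fun d => M k v01 d * M d' d u00)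
            (fun d _ => mul_nonneg (Mnn hM k d v01) (Mnn hM d' u00 d)) (Finset.mem_univ u01)
    rw [← h1a d' k] at h1
    rw [e6]; linarith
  have heq : e = v01 := sum_le_one_unique hnn htr hterm_e hterm_v
  rw [← heq]
  exact he1



open Classical in
noncomputable def slabFun [Fintype A] [Nonempty A] (M : Fin r → Matrix A A ℤ)
    (m : Fin r → ℤ) (k : Fin r) (w' : (Fin r → ℤ) → A) (top : A) :
    ℕ → (Fin r → ℤ) → A
  | 0, _ => top
  | (n+1), l =>
    if h : ∃ d, d ≠ k ∧ l d < m d then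
      if hc : ∃ c, M k c (w' (l - evec r k)) = 1 ∧
          M (h.choose) (slabFun M m k w' top n (l + evec r (h.choose))) c = 1 then
        hc.choose
      else Classical.arbitrary A
    else top

noncomputable def gfun [Fintype A] [Nonempty A] (M : Fin r → Matrix A A ℤ)
    (m : Fin r → ℤ) (k : Fin r) (w' : (Fin r → ℤ) → A) (top : A)
    (l : Fin r → ℤ) : A := slabFun M m k w' top (mu m l) l

lemma slab_inv (h1a : H1a M) (h1b : H1b M) (h1c : H1c M) [Nonempty A]
    {k : Fin r} {m m' : Fin r → ℤ} {w' : (Fin r → ℤ) → A} {top : A}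
    (hm'0 : (0 : Fin r → ℤ) ≤ m')
    (hmk : m k = m' k + 1) (hmne : ∀ d, d ≠ k → m d = m' d)
    (hw' : ∀ (l : Fin r → ℤ) (d : Fin r), 0 ≤ l → l + evec r d ≤ m' →
      M d (w' (l + evec r d)) (w' l) = 1)
    (htop : M k top (w' m') = 1) :
    ∀ (n : ℕ) (l : Fin r → ℤ), 0 ≤ l → l ≤ m → l k = m k → mu m l = n →
      M k (gfun M m k w' top l) (w' (l - evec r k)) = 1 ∧
      ∀ d, d ≠ k → l d < m d →
        M d (gfun M m k w' top (l + evec r d)) (gfun M m k w' top l) = 1 := by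
  intro n
  induction n using Nat.strong_induction_on with
  | _ n IH =>
  intro l hl0 hlm hlk hmu
  by_cases hex : ∃ d, d ≠ k ∧ l d < m d
  · set d₀ := hex.choose with hd₀def
    have hd₀ : d₀ ≠ k ∧ l d₀ < m d₀ := hex.choose_spec
    have hmu1 : 1 ≤ mu m l := mu_pos hd₀.2
    obtain ⟨n', rfl⟩ : ∃ n', n = n' + 1 := ⟨n - 1, by omega⟩
    have hmun' : mu m (l + evec r d₀) = n' := by have := mu_succ hd₀.2; omega
    have h0' : (0 : Fin r → ℤ) ≤ l + evec r d₀ := nonneg_add hl0 _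
    have hm1 : l + evec r d₀ ≤ m := le_box_add hlm hd₀.2
    have hk' : (l + evec r d₀) k = m k := by rw [apply_add_ne _ (Ne.symm hd₀.1)]; exact hlk
    have IH₀ := IH n' (by omega) (l + evec r d₀) h0' hm1 hk' hmun'
    have hlk1 : 1 ≤ l k := by have h := hm'0 k; simp only [Pi.zero_apply] at h; omega
    have hx0 : (0 : Fin r → ℤ) ≤ l - evec r k := by
      rw [Pi.le_def]; intro d
      by_cases hd : d = k
      · subst hd; rw [apply_sub_self]; simp only [Pi.zero_apply]; omega
      · rw [apply_sub_ne _ hd]; exact hl0 d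
    have hxe : ∀ d', d' ≠ k → l d' < m d' → l - evec r k + evec r d' ≤ m' := by
      intro d' hd'k hd'm
      rw [Pi.le_def]; intro d
      by_cases hd : d = k
      · subst hd
        rw [apply_add_ne _ (Ne.symm hd'k), apply_sub_self]
        omega
      · by_cases hd2 : d = d'
        · rw [hd2, apply_add_self, apply_sub_ne _ hd'k]
          have h1 := hmne d' hd'k
          have h2 := hd'm
          omega
        · rw [apply_add_ne _ hd2, apply_sub_ne _ hd]
          have h1 := hmne d hd; have h2 := hlm d
          rw [← h1]; exact h2
    have hedge1 : M d₀ (w' (l - evec r k + evec r d₀)) (w' (l - evec r k)) = 1 :=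
      hw' _ d₀ hx0 (hxe d₀ hd₀.1 hd₀.2)
    have hedge2 : M k (gfun M m k w' top (l + evec r d₀))
        (w' (l - evec r k + evec r d₀)) = 1 := by
      have h := IH₀.1; rw [sub_add_eq_add_sub]; exact h
    have hc : ∃ c, M k c (w' (l - evec r k)) = 1 ∧
        M d₀ (slabFun M m k w' top n' (l + evec r d₀)) c = 1 := by
      obtain ⟨c, hc1, hc2⟩ := square_exists hM h1a h1b hd₀.1 hedge1 hedge2
      refine ⟨c, hc1, ?_⟩
      rw [show slabFun M m k w' top n' (l + evec r d₀)
            = gfun M m k w' top (l + evec r d₀) from by rw [gfun, hmun']]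
      exact hc2
    have hgl : gfun M m k w' top l = hc.choose := by
      rw [gfun, hmu]
      simp only [slabFun]
      rw [dif_pos hex]
      rw [← hd₀def]
      rw [dif_pos hc]
    obtain ⟨hc1, hc2⟩ := hc.choose_spec
    rw [← hgl] at hc1 hc2
    rw [show slabFun M m k w' top n' (l + evec r d₀)
          = gfun M m k w' top (l + evec r d₀) from by rw [gfun, hmun']] at hc2
    refine ⟨hc1, ?_⟩
    intro d' hd'k hd'm
    by_cases hdd : d' = d₀
    · subst hdd; exact hc2
    · have h0'' : (0 : Fin r → ℤ) ≤ l + evec r d' := nonneg_add hl0 _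
      have hm'' : l + evec r d' ≤ m := le_box_add hlm hd'm
      have hk'' : (l + evec r d') k = m k := by
        rw [apply_add_ne _ (Ne.symm hd'k)]; exact hlk
      have hmun'' : mu m (l + evec r d') = n' := by have := mu_succ hd'm; omega
      have IH₁ := IH n' (by omega) _ h0'' hm'' hk'' hmun''
      have e3 : M d' (gfun M m k w' top (l + evec r d₀ + evec r d'))
          (gfun M m k w' top (l + evec r d₀)) = 1 := by
        apply IH₀.2 d' hd'k
        rw [apply_add_ne _ hdd]; exact hd'm
      have e4 : M d' (w' (l - evec r k + evec r d')) (w' (l - evec r k)) = 1 :=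
        hw' _ d' hx0 (hxe d' hd'k hd'm)
      have e5 : M k (gfun M m k w' top (l + evec r d'))
          (w' (l - evec r k + evec r d')) = 1 := by
        have h := IH₁.1; rw [sub_add_eq_add_sub]; exact h
      have e6 : M d₀ (gfun M m k w' top (l + evec r d₀ + evec r d'))
          (gfun M m k w' top (l + evec r d')) = 1 := by
        have h := IH₁.2 d₀ hd₀.1 (by rw [apply_add_ne _ (fun hh => hdd hh.symm)]; exact hd₀.2)
        rw [add_right_comm] at h
        exact h
      exact cube hM h1a h1b h1c (fun hh => hdd hh.symm) hd₀.1 hd'k hc1 hc2 e3 e4 e5 e6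
  · have hlm' : l = m := by
      funext d
      by_cases hd : d = k
      · subst hd; exact hlk
      · have h1 : l d ≤ m d := hlm d
        push_neg at hex
        have h2 := hex d hd
        omega
    have hld : ∀ d, l d = m d := fun d => congrFun hlm' d
    constructor
    · have hmu0 : mu m l = 0 := by
        unfold mu; apply Finset.sum_eq_zero; intro d _
        have := hld d; omega
      rw [gfun, hmu0]
      simp only [slabFun]
      have hsub : l - evec r k = m' := by
        funext d
        by_cases hd : d = k
        · rw [hd, apply_sub_self]; have := hld k; omega
        · rw [apply_sub_ne _ hd]
          have h1 := hld d; have h2 := hmne d hd; omega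
      rw [hsub]; exact htop
    · intro d hdk hdm; exact absurd ⟨d, hdk, hdm⟩ hex

end Aux

lemma stair_cast (p : ℕ) (j : Fin (p + 1) → Fin r) (iN : ℕ) (hi : iN ≤ p) :
    ∑ i' ∈ Finset.univ.filter (fun i' : Fin (p + 1) => (i' : ℕ) < iN), evec r (j i')
    = ∑ i' ∈ Finset.univ.filter (fun i' : Fin p => (i' : ℕ) < iN),
        evec r (j i'.castSucc) := by
  classical
  rw [Finset.sum_filter, Finset.sum_filter, Fin.sum_univ_castSucc
    (f := fun i' : Fin (p+1) => if (i' : ℕ) < iN then evec r (j i') else 0)]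
  simp only [Fin.coe_castSucc, Fin.val_last]
  rw [if_neg (by omega : ¬ p < iN), add_zero]

lemma stair_full (p : ℕ) (j : Fin p → Fin r) (iN : ℕ) (hi : p ≤ iN) :
    ∑ i' ∈ Finset.univ.filter (fun i' : Fin p => (i' : ℕ) < iN), evec r (j i')
    = ∑ i', evec r (j i') := by
  congr 1
  exact Finset.filter_true_of_mem (fun x _ => lt_of_lt_of_le x.isLt hi)

lemma sum_evec_nonneg {p : ℕ} (j : Fin p → Fin r) (s : Finset (Fin p)) :
    (0 : Fin r → ℤ) ≤ ∑ i' ∈ s, evec r (j i') :=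
  Finset.sum_nonneg fun i _ => evec_nonneg _

lemma stair_le {p : ℕ} (j : Fin p → Fin r) (s : Finset (Fin p)) :
    ∑ i' ∈ s, evec r (j i') ≤ ∑ i', evec r (j i') :=
  Finset.sum_le_sum_of_subset_of_nonneg (Finset.subset_univ s)
    (fun i _ _ => evec_nonneg _)

/-- under (H1a), (H1b), (H1c), a chain of transitions
`M (j i) (a i) (a (i-1)) = 1` determines a unique word `w` of shape
`e_{j_1} + ⋯ + e_{j_p}` with `w(e_{j_1} + ⋯ + e_{j_i}) = a i` for all `i`. -/
theorem stmt_3 [Fintype A] [Nonempty A] (hr : 0 < r)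
    (M : Fin r → Matrix A A ℤ)
    (hM : ∀ j (a b : A), M j b a = 0 ∨ M j b a = 1)
    (h1a : H1a M) (h1b : H1b M) (h1c : H1c M)
    (p : ℕ) (j : Fin p → Fin r) (a : Fin (p + 1) → A)
    (ha : ∀ i : Fin p, M (j i) (a i.succ) (a i.castSucc) = 1) :
    ∃ w : (Fin r → ℤ) → A,
      (IsWord M (∑ i : Fin p, evec r (j i)) w ∧
        ∀ i : Fin (p + 1),
          w (∑ i' ∈ Finset.univ.filter (fun i' : Fin p => (i' : ℕ) < (i : ℕ)),
              evec r (j i')) = a i) ∧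
      ∀ w' : (Fin r → ℤ) → A, IsWord M (∑ i : Fin p, evec r (j i)) w' →
        (∀ i : Fin (p + 1),
          w' (∑ i' ∈ Finset.univ.filter (fun i' : Fin p => (i' : ℕ) < (i : ℕ)),
              evec r (j i')) = a i) →
        AgreeOn (∑ i : Fin p, evec r (j i)) w w' := by
  induction p with
  | zero =>
    have hsum0 : (∑ i : Fin 0, evec r (j i)) = 0 := by simp
    refine ⟨fun _ => a 0, ⟨⟨?_, ?_⟩, ?_⟩, ?_⟩
    · rw [hsum0]
    · intro l d hl0 hlm
      rw [hsum0] at hlm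
      exfalso
      have h1 : (l + evec r d) d ≤ (0 : Fin r → ℤ) d := le_apply hlm d
      have h2 : 0 ≤ l d := nonneg_apply hl0 d
      rw [apply_add_self] at h1
      simp only [Pi.zero_apply] at h1
      omega
    · intro i
      have hi : i = 0 := by apply Fin.ext; have := i.isLt; omega
      subst hi
      rfl
    · intro v hvw hvst l hl0 hlm
      rw [hsum0] at hlm
      have hl : l = 0 := le_antisymm hlm hl0
      subst hl
      have h0 := hvst 0
      have heq : (∑ i' ∈ Finset.univ.filter (fun i' : Fin 0 => (i' : ℕ) < ((0 : Fin 1) : ℕ)),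
          evec r (j i')) = 0 := by simp
      rw [heq] at h0
      exact h0.symm
  | succ p IH =>
    obtain ⟨w', ⟨hw'w, hw'st⟩, hw'u⟩ := IH (fun i => j i.castSucc) (fun i => a i.castSucc)
      (fun i => by have h := ha i.castSucc; rwa [Fin.succ_castSucc] at h)
    set k := j (Fin.last p) with hkdef
    set m' := ∑ i : Fin p, evec r (j i.castSucc) with hm'def
    set m := ∑ i : Fin (p+1), evec r (j i) with hmdef
    set top := a (Fin.last (p+1)) with htopdef
    have hmm' : m = m' + evec r k := Fin.sum_univ_castSucc (fun i => evec r (j i))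
    have hm'0 : (0 : Fin r → ℤ) ≤ m' := sum_evec_nonneg _ _
    have hm0 : (0 : Fin r → ℤ) ≤ m := sum_evec_nonneg _ _
    have hmk : m k = m' k + 1 := by rw [hmm', apply_add_self]
    have hmne : ∀ d, d ≠ k → m d = m' d := fun d hd => by rw [hmm', apply_add_ne _ hd]
    have hm'm : m' ≤ m := by rw [hmm']; exact le_add_of_nonneg_right (evec_nonneg _)
    have hw'm' : w' m' = a (Fin.last p).castSucc := by
      have h := hw'st (Fin.last p)
      rwa [stair_full p _ _ (le_of_eq (Fin.val_last p).symm)] at h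
    have htop : M k top (w' m') = 1 := by
      rw [hw'm', htopdef, ← Fin.succ_last]
      exact ha (Fin.last p)
    have hIN := slab_inv (M := M) hM h1a h1b h1c hm'0 hmk hmne hw'w.2 htop
    have hINV : ∀ l : Fin r → ℤ, 0 ≤ l → l ≤ m → l k = m k →
        M k (gfun M m k w' top l) (w' (l - evec r k)) = 1 ∧
        ∀ d, d ≠ k → l d < m d →
          M d (gfun M m k w' top (l + evec r d)) (gfun M m k w' top l) = 1 :=
      fun l h1 h2 h3 => hIN (mu m l) l h1 h2 h3 rfl
    have hbox' : ∀ l : Fin r → ℤ, l ≤ m → l k ≠ m k → l ≤ m' := by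
      intro l hl hkne
      rw [Pi.le_def]; intro d
      by_cases hd : d = k
      · rw [hd]; have h1 : l k ≤ m k := le_apply hl k; omega
      · have h1 : l d ≤ m d := le_apply hl d
        have h2 := hmne d hd; omega
    have hgm : gfun M m k w' top m = top := by
      have hmu0 : mu m m = 0 := by
        unfold mu; apply Finset.sum_eq_zero; intro d _; omega
      rw [gfun, hmu0]
      rfl
    have hsum_last : ∀ i : Fin (p + 2), (i : ℕ) = p + 1 →
        (∑ i' ∈ Finset.univ.filter (fun i' : Fin (p+1) => (i' : ℕ) < (i : ℕ)),
          evec r (j i')) = m := by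
      intro i hi
      rw [hi, stair_full (p+1) _ _ (le_refl _), hmdef]
    have hsum_cast : ∀ i : Fin (p + 2), (i : ℕ) ≤ p →
        (∑ i' ∈ Finset.univ.filter (fun i' : Fin (p+1) => (i' : ℕ) < (i : ℕ)),
          evec r (j i')) =
        ∑ i' ∈ Finset.univ.filter (fun i' : Fin p => (i' : ℕ) < (i : ℕ)),
          evec r (j i'.castSucc) := fun i hi => stair_cast p j (i : ℕ) hi
    refine ⟨fun l => if l k = m k then gfun M m k w' top l else w' l, ⟨⟨hm0, ?_⟩, ?_⟩, ?_⟩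
    · intro l d hl0 hlm
      beta_reduce
      have hld : l d < m d := by
        have h : (l + evec r d) d ≤ m d := le_apply hlm d
        rw [apply_add_self] at h; omega
      have hlle : l ≤ m := le_trans (le_add_of_nonneg_right (evec_nonneg _)) hlm
      by_cases hdk : d = k
      · have hlk : l k < m k := by rw [← hdk]; exact hld
        have hlknem : l k ≠ m k := by omega
        rw [if_neg hlknem]
        by_cases hsl : (l + evec r d) k = m k
        · rw [if_pos hsl]
          rw [hdk] at hsl ⊢
          have h := (hINV (l + evec r k) (nonneg_add hl0 _) (hdk ▸ hlm) hsl).1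
          rwa [add_sub_cancel_right] at h
        · rw [if_neg hsl]
          apply hw'w.2 l d hl0
          rw [Pi.le_def]; intro d'
          by_cases hd' : d' = d
          · rw [hd', apply_add_self]
            rw [hdk, apply_add_self] at hsl
            have h3 : (l + evec r d) d ≤ m d := le_apply hlm d
            rw [apply_add_self] at h3
            rw [hd', hdk] at *
            omega
          · rw [apply_add_ne _ hd']
            have h1 : (l + evec r d) d' ≤ m d' := le_apply hlm d'
            rw [apply_add_ne _ hd'] at h1
            have h2 := hmne d' (by rw [← hdk]; exact hd')
            omega
      · have hsk : (l + evec r d) k = l k := apply_add_ne _ (fun h => hdk h.symm)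
        by_cases hk : l k = m k
        · rw [if_pos hk, if_pos (by rw [hsk]; exact hk)]
          exact (hINV l hl0 hlle hk).2 d hdk hld
        · rw [if_neg hk, if_neg (by rw [hsk]; exact hk)]
          apply hw'w.2 l d hl0
          exact hbox' (l + evec r d) hlm (by rw [hsk]; exact hk)
    · intro i
      beta_reduce
      by_cases hi : (i : ℕ) ≤ p
      · rw [hsum_cast i hi]
        have hsle : (∑ i' ∈ Finset.univ.filter (fun i' : Fin p => (i' : ℕ) < (i : ℕ)),
            evec r (j i'.castSucc)) ≤ m' := by
          rw [hm'def]
          exact stair_le _ _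
        have hkne : (∑ i' ∈ Finset.univ.filter (fun i' : Fin p => (i' : ℕ) < (i : ℕ)),
            evec r (j i'.castSucc)) k ≠ m k := by
          have h1 : (∑ i' ∈ Finset.univ.filter (fun i' : Fin p => (i' : ℕ) < (i : ℕ)),
              evec r (j i'.castSucc)) k ≤ m' k := le_apply hsle k
          omega
        rw [if_neg hkne]
        have hi' : i = (⟨(i : ℕ), by omega⟩ : Fin (p+1)).castSucc := by
          apply Fin.ext; simp
        rw [hi']
        exact hw'st ⟨(i : ℕ), by omega⟩
      · have hi' : (i : ℕ) = p + 1 := by have := i.isLt; omega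
        rw [hsum_last i hi', if_pos rfl, hgm, htopdef]
        congr 1
        apply Fin.ext; simp [hi']
    · intro v hvw hvst
      have hvw' : IsWord M m' v :=
        ⟨hm'0, fun l d h0 hle => hvw.2 l d h0 (le_trans hle hm'm)⟩
      have hvst' : ∀ i : Fin (p + 1),
          v (∑ i' ∈ Finset.univ.filter (fun i' : Fin p => (i' : ℕ) < (i : ℕ)),
              evec r (j i'.castSucc)) = a i.castSucc := by
        intro i
        have h := hvst i.castSucc
        rw [hsum_cast i.castSucc (by simpa using Nat.lt_succ_iff.mp i.isLt)] at h
        simpa using h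
      have hagree' : AgreeOn m' w' v := hw'u v hvw' hvst'
      have hUNIQ : ∀ (n : ℕ) (l : Fin r → ℤ), 0 ≤ l → l ≤ m → l k = m k →
          mu m l = n → v l = gfun M m k w' top l := by
        intro n
        induction n using Nat.strong_induction_on with
        | _ n IHn =>
        intro l hl0 hlm hlk hmu
        by_cases hex : ∃ d, d ≠ k ∧ l d < m d
        · obtain ⟨d₀, hd₀k, hd₀m⟩ := hex
          have hmu1 : 1 ≤ mu m l := mu_pos hd₀m
          have hmun' : mu m (l + evec r d₀) = n - 1 := by have := mu_succ hd₀m; omega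
          have hlk1 : 1 ≤ l k := by have h := hm'0 k; simp only [Pi.zero_apply] at h; omega
          have hx0 : (0 : Fin r → ℤ) ≤ l - evec r k := by
            rw [Pi.le_def]; intro d
            by_cases hd : d = k
            · rw [hd, apply_sub_self]; simp only [Pi.zero_apply]; omega
            · rw [apply_sub_ne _ hd]; exact hl0 d
          have hxm' : l - evec r k ≤ m' := by
            rw [Pi.le_def]; intro d
            by_cases hd : d = k
            · rw [hd, apply_sub_self]; omega
            · rw [apply_sub_ne _ hd]
              have h2 := hmne d hd
              have h3 : l d ≤ m d := le_apply hlm d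
              omega
          have h1 := (hINV l hl0 hlm hlk).1
          have h2 := (hINV l hl0 hlm hlk).2 d₀ hd₀k hd₀m
          have hv1 : M k (v l) (w' (l - evec r k)) = 1 := by
            have h := hvw.2 (l - evec r k) k hx0 (by rw [sub_add_cancel]; exact hlm)
            rw [sub_add_cancel] at h
            rwa [hagree' (l - evec r k) hx0 hxm']
          have hv2 : M d₀ (v (l + evec r d₀)) (v l) = 1 :=
            hvw.2 l d₀ hl0 (le_box_add hlm hd₀m)
          have hvg : v (l + evec r d₀) = gfun M m k w' top (l + evec r d₀) :=
            IHn (n-1) (by omega) _ (nonneg_add hl0 _) (le_box_add hlm hd₀m)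
              (by rw [apply_add_ne _ (fun h => hd₀k h.symm)]; exact hlk) hmun'
          rw [hvg] at hv2
          exact (square_unique hM h1a h1b hd₀k h1 h2 hv1 hv2).symm
        · have hlm' : l = m := by
            funext d
            by_cases hd : d = k
            · rw [hd]; exact hlk
            · have h1 : l d ≤ m d := le_apply hlm d
              push_neg at hex
              have h2 := hex d hd
              omega
          rw [hlm', hgm]
          have h := hvst (Fin.last (p+1))
          rwa [hsum_last _ (Fin.val_last _)] at h
      intro l hl0 hlm
      beta_reduce
      by_cases hk : l k = m k
      · rw [if_pos hk]
        exact (hUNIQ (mu m l) l hl0 hlm hk rfl).symm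
      · rw [if_neg hk]
        exact hagree' l hl0 (hbox' l hlm hk)
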